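/- Let λ₁, λ₂ be real numbers that are algebraically independent over ℚ. Then the set of points of ℝ² fixed by at least one non-identity element of the subgroup of the homeomorphism group of ℝ² generated by τ₁, τ₂, f_{λ₁} and f_{λ₂} is dense in ℝ². -/

import Mathlib

/-- The group of self-homeomorphisms of a topological space,
with `(f * g) x = f (g x)`. -/
instance homeomorphSelfGroup {X : Type*} [TopologicalSpace X] : Group (X ≃ₜ X) where
  mul f g := g.trans f
  one := Homeomorph.refl X
  inv := Homeomorph.symm
  mul_assoc _ _ _ := rfl
  one_mul _ := rfl
  mul_one _ := rfl
  inv_mul_cancel f := Homeomorph.ext fun x => f.symm_apply_apply x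

open Classical in
/-- For `λ ≠ 0`, the homeomorphism `f_λ : (x,y) ↦ (λx, λ⁻¹y)` of `ℝ²`
(and the identity for the junk value `λ = 0`). -/
noncomputable def fHomeo (l : ℝ) : (ℝ × ℝ) ≃ₜ (ℝ × ℝ) :=
  if h : l ≠ 0 then
    (Homeomorph.mulLeft₀ l h).prodCongr (Homeomorph.mulLeft₀ l⁻¹ (inv_ne_zero h))
  else Homeomorph.refl _

/-- The translation `τ₁ : (x,y) ↦ (x+1, y)` of `ℝ²`. -/
noncomputable def tau₁ : (ℝ × ℝ) ≃ₜ (ℝ × ℝ) := Homeomorph.addLeft ((1 : ℝ), (0 : ℝ))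

/-- The translation `τ₂ : (x,y) ↦ (x, y+1)` of `ℝ²`. -/
noncomputable def tau₂ : (ℝ × ℝ) ≃ₜ (ℝ × ℝ) := Homeomorph.addLeft ((0 : ℝ), (1 : ℝ))

lemma mul_apply' (f g : (ℝ × ℝ) ≃ₜ (ℝ × ℝ)) (x : ℝ × ℝ) : (f * g) x = f (g x) := rfl
lemma inv_apply' (f : (ℝ × ℝ) ≃ₜ (ℝ × ℝ)) (x : ℝ × ℝ) : f⁻¹ x = f.symm x := rfl
lemma one_apply' (x : ℝ × ℝ) : (1 : (ℝ × ℝ) ≃ₜ (ℝ × ℝ)) x = x := rfl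

lemma addLeft_mul (v w : ℝ × ℝ) :
    (Homeomorph.addLeft v : (ℝ × ℝ) ≃ₜ (ℝ × ℝ)) * Homeomorph.addLeft w =
      Homeomorph.addLeft (v + w) :=
  Homeomorph.ext fun x => by simp [mul_apply', add_assoc]

lemma addLeft_zpow (v : ℝ × ℝ) (m : ℤ) :
    (Homeomorph.addLeft v : (ℝ × ℝ) ≃ₜ (ℝ × ℝ)) ^ m = Homeomorph.addLeft (m • v) := by
  induction m using Int.induction_on with
  | zero => exact Homeomorph.ext fun x => by simp [one_apply']
  | succ n ih =>
      rw [zpow_add_one, ih, show ((n : ℤ) + 1) • v = (n : ℤ) • v + v by rw [add_smul, one_smul],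
        ← addLeft_mul]
  | pred n ih =>
      rw [show (-(n : ℤ) - 1) = (-(n : ℤ)) - 1 by ring, zpow_sub_one, ih]
      refine Homeomorph.ext fun x => ?_
      have : ((Homeomorph.addLeft v : (ℝ × ℝ) ≃ₜ (ℝ × ℝ)))⁻¹ x = -v + x := by
        rw [inv_apply', eq_neg_add_iff_add_eq]
        exact (Homeomorph.addLeft v).apply_symm_apply x
      rw [mul_apply', this]
      simp only [Homeomorph.coe_addLeft, sub_smul, one_smul]
      abel

lemma fHomeo_apply {l : ℝ} (hl : l ≠ 0) (x : ℝ × ℝ) :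
    fHomeo l x = (l * x.1, l⁻¹ * x.2) := by
  rw [fHomeo, dif_pos hl]; rfl

lemma fHomeo_symm_apply {l : ℝ} (hl : l ≠ 0) (x : ℝ × ℝ) :
    (fHomeo l).symm x = (l⁻¹ * x.1, l * x.2) := by
  rw [fHomeo, dif_pos hl]
  simp [Homeomorph.prodCongr, Homeomorph.mulLeft₀, Equiv.mulLeft₀]
  rfl

lemma conj1 {l : ℝ} (hl : l ≠ 0) :
    fHomeo l * tau₁ * (fHomeo l)⁻¹ = Homeomorph.addLeft ((l, 0) : ℝ × ℝ) := by
  refine Homeomorph.ext fun x => ?_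
  rw [mul_apply', mul_apply', inv_apply', fHomeo_symm_apply hl]
  show fHomeo l (((1:ℝ),(0:ℝ)) + (l⁻¹ * x.1, l * x.2)) = _
  rw [fHomeo_apply hl]
  simp only [Prod.ext_iff, Homeomorph.coe_addLeft, Prod.fst_add, Prod.snd_add]
  constructor <;> field_simp <;> ring

lemma conj2 {l : ℝ} (hl : l ≠ 0) :
    (fHomeo l)⁻¹ * tau₂ * fHomeo l = Homeomorph.addLeft ((0, l) : ℝ × ℝ) := by
  refine Homeomorph.ext fun x => ?_
  rw [mul_apply', mul_apply', fHomeo_apply hl]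
  show (fHomeo l).symm (((0:ℝ),(1:ℝ)) + (l * x.1, l⁻¹ * x.2)) = _
  rw [fHomeo_symm_apply hl]
  simp only [Prod.ext_iff, Homeomorph.coe_addLeft, Prod.fst_add, Prod.snd_add]
  constructor <;> field_simp <;> ring

lemma dense_pair {α : ℝ} (hα : Irrational α) :
    Dense ((AddSubgroup.closure {(1:ℝ), α} : AddSubgroup ℝ) : Set ℝ) := by
  rcases (AddSubgroup.closure {(1:ℝ), α}).dense_or_cyclic with h | ⟨a, ha⟩
  · exact h
  · exfalso
    have h1 : (1:ℝ) ∈ AddSubgroup.closure {(1:ℝ), α} :=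
      AddSubgroup.subset_closure (by simp)
    have h2 : α ∈ AddSubgroup.closure {(1:ℝ), α} :=
      AddSubgroup.subset_closure (by simp)
    rw [ha, AddSubgroup.mem_closure_singleton] at h1 h2
    obtain ⟨n, hn⟩ := h1
    obtain ⟨k, hk⟩ := h2
    have hn0 : (n : ℝ) ≠ 0 := by
      rintro h
      rw [zsmul_eq_mul, h, zero_mul] at hn
      exact one_ne_zero hn.symm
    refine hα ⟨(k : ℚ) / (n : ℚ), ?_⟩
    rw [zsmul_eq_mul] at hn hk
    have ha' : a = (n : ℝ)⁻¹ := by field_simp at hn ⊢; linarith [hn]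
    push_cast
    rw [← hk, ha']
    field_simp

/-- For `λ₁, λ₂` algebraically independent over `ℚ`, the set of points of `ℝ²` fixed
by some nontrivial element of the group generated by `τ₁, τ₂, f_{λ₁}, f_{λ₂}` is
dense in `ℝ²`. -/
theorem affine_example_dense_fixed_points
    (l₁ l₂ : ℝ) (hind : AlgebraicIndependent ℚ ![l₁, l₂]) :
    Dense {p : ℝ × ℝ | ∃ g ∈ (Subgroup.closure
        {tau₁, tau₂, fHomeo l₁, fHomeo l₂} : Subgroup ((ℝ × ℝ) ≃ₜ (ℝ × ℝ))),
      g ≠ 1 ∧ g p = p} := by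
  have htr : Transcendental ℚ l₁ := by simpa using hind.transcendental 0
  have hirr : Irrational l₁ := htr.irrational
  have h0 : l₁ ≠ 0 := hirr.ne_zero
  have h1 : l₁ ≠ 1 := hirr.ne_one
  have hsub1 : (1:ℝ) - l₁ ≠ 0 := sub_ne_zero.2 (Ne.symm h1)
  have hsub2 : l₁ - 1 ≠ 0 := sub_ne_zero.2 h1
  have hu0 : ((1:ℝ) - l₁)⁻¹ ≠ 0 := inv_ne_zero hsub1
  have hw0 : l₁ * (l₁ - 1)⁻¹ ≠ 0 := mul_ne_zero h0 (inv_ne_zero hsub2)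
  set S := (AddSubgroup.closure {(1:ℝ), l₁}) with hS
  have hSd : Dense (S : Set ℝ) := dense_pair hirr
  set e : (ℝ × ℝ) ≃ₜ (ℝ × ℝ) :=
    (Homeomorph.mulLeft₀ _ hu0).prodCongr (Homeomorph.mulLeft₀ _ hw0) with he
  have hD : Dense (e '' ((S : Set ℝ) ×ˢ (S : Set ℝ))) :=
    e.surjective.denseRange.dense_image e.continuous (hSd.prod hSd)
  refine hD.mono ?_
  rintro _ ⟨⟨b, c⟩, ⟨hb, hc⟩, rfl⟩
  obtain ⟨m, n, hmn⟩ := AddSubgroup.mem_closure_pair.1 hb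
  obtain ⟨p, q, hpq⟩ := AddSubgroup.mem_closure_pair.1 hc
  rw [zsmul_eq_mul, zsmul_eq_mul, mul_one] at hmn hpq
  have heval : e (b, c) = ((1 - l₁)⁻¹ * b, l₁ * (l₁ - 1)⁻¹ * c) := rfl
  rw [heval]
  set g := tau₁ ^ m * (fHomeo l₁ * tau₁ * (fHomeo l₁)⁻¹) ^ n *
      (tau₂ ^ p * (((fHomeo l₁)⁻¹ * tau₂ * fHomeo l₁) ^ q * fHomeo l₁)) with hg
  have hgapp : ∀ x : ℝ × ℝ,
      g x = ((m:ℝ) + (n:ℝ) * l₁ + l₁ * x.1, ((p:ℝ) + (q:ℝ) * l₁) + l₁⁻¹ * x.2) := by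
    intro x
    rw [hg, conj1 h0, conj2 h0]
    unfold tau₁ tau₂
    rw [addLeft_zpow, addLeft_zpow, addLeft_zpow, addLeft_zpow,
        mul_apply', mul_apply', mul_apply', mul_apply', fHomeo_apply h0]
    simp only [Homeomorph.coe_addLeft, Prod.smul_mk, zsmul_eq_mul, mul_zero, mul_one,
      Prod.mk_add_mk, Prod.ext_iff, Prod.fst_add, Prod.snd_add]
    constructor <;> ring
  have hτ₁ : tau₁ ∈ (Subgroup.closure
      {tau₁, tau₂, fHomeo l₁, fHomeo l₂} : Subgroup ((ℝ × ℝ) ≃ₜ (ℝ × ℝ))) :=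
    Subgroup.subset_closure (by simp)
  have hτ₂ : tau₂ ∈ (Subgroup.closure
      {tau₁, tau₂, fHomeo l₁, fHomeo l₂} : Subgroup ((ℝ × ℝ) ≃ₜ (ℝ × ℝ))) :=
    Subgroup.subset_closure (by simp)
  have hF : fHomeo l₁ ∈ (Subgroup.closure
      {tau₁, tau₂, fHomeo l₁, fHomeo l₂} : Subgroup ((ℝ × ℝ) ≃ₜ (ℝ × ℝ))) :=
    Subgroup.subset_closure (by simp)
  refine ⟨g, ?_, ?_, ?_⟩
  · exact mul_mem (mul_mem (zpow_mem hτ₁ m)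
      (zpow_mem (mul_mem (mul_mem hF hτ₁) (inv_mem hF)) n))
      (mul_mem (zpow_mem hτ₂ p)
        (mul_mem (zpow_mem (mul_mem (mul_mem (inv_mem hF) hτ₂) hF) q) hF))
  · intro hgone
    have e0 := hgapp (0, 0)
    have e1 := hgapp (1, 0)
    rw [hgone, one_apply'] at e0 e1
    have c0 : (0:ℝ) = (m:ℝ) + (n:ℝ) * l₁ + l₁ * 0 := congrArg Prod.fst e0
    have c1 : (1:ℝ) = (m:ℝ) + (n:ℝ) * l₁ + l₁ * 1 := congrArg Prod.fst e1
    apply h1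
    linarith
  · rw [hgapp]
    refine Prod.ext ?_ ?_
    · show (m:ℝ) + (n:ℝ) * l₁ + l₁ * ((1 - l₁)⁻¹ * b) = (1 - l₁)⁻¹ * b
      rw [hmn]
      field_simp
      ring
    · show ((p:ℝ) + (q:ℝ) * l₁) + l₁⁻¹ * (l₁ * (l₁ - 1)⁻¹ * c) = l₁ * (l₁ - 1)⁻¹ * c
      rw [hpq]
      field_simp
      ring
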